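/- For every n with 4 ≤ n ≤ 9, f(n) = ⌈n/3⌉. -/

import Mathlib

open Finset

/-- The union of the first `k` sets in the ordering `π` (positions `1,…,k`,
i.e. 0-based indices `< k`). -/
def unionUpTo {α : Type*} [DecidableEq α] {m : ℕ} (X : Fin m → Finset α)
    (π : Equiv.Perm (Fin m)) (k : ℕ) : Finset α :=
  (Finset.univ.filter (fun i : Fin m => (i : ℕ) < k)).biUnion (fun i => X (π i))

/-- `Δ(𝒳,π,k) = |X_{π(1)} ∪ ⋯ ∪ X_{π(k)}| − k`. -/
def delta {α : Type*} [DecidableEq α] {m : ℕ} (X : Fin m → Finset α)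
    (π : Equiv.Perm (Fin m)) (k : ℕ) : ℤ :=
  ((unionUpTo X π k).card : ℤ) - k

/-- `Δ(𝒳,π) = max_{1 ≤ k ≤ m} Δ(𝒳,π,k)`. -/
noncomputable def DeltaPerm {α : Type*} [DecidableEq α] {m : ℕ} (X : Fin m → Finset α)
    (π : Equiv.Perm (Fin m)) : ℤ :=
  sSup {d : ℤ | ∃ k : ℕ, 1 ≤ k ∧ k ≤ m ∧ d = delta X π k}

/-- `Δ(𝒳) = min_π Δ(𝒳,π)`. -/
noncomputable def DeltaMin {α : Type*} [DecidableEq α] {m : ℕ} (X : Fin m → Finset α) : ℤ :=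
  sInf {d : ℤ | ∃ π : Equiv.Perm (Fin m), d = DeltaPerm X π}

/-- `f_c(n,m) = max_{𝒳 ∈ S(n,m,c)} Δ(𝒳)`, families of `m` subsets of an
`n`-element ground set, each of size at most `c`. -/
noncomputable def fFam (n m c : ℕ) : ℤ :=
  sSup {d : ℤ | ∃ X : Fin m → Finset (Fin n), (∀ i, (X i).card ≤ c) ∧ d = DeltaMin X}

/-! ### Auxiliary development: the upper bound via a greedy removal argument -/

section Build

variable {n t : ℕ} (X : Fin n → Finset (Fin n))

/-- A subfamily (indexed by `S`) is stuck if its union has size exactly `|S| + t`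
and removing any single member does not shrink the union. -/
def FamStuck (t : ℕ) (S : Finset (Fin n)) : Prop :=
  (S.biUnion X).card = S.card + t ∧ ∀ i ∈ S, (S.erase i).biUnion X = S.biUnion X

variable {X}

lemma two_le_filter {S : Finset (Fin n)}
    (hS : ∀ i ∈ S, (S.erase i).biUnion X = S.biUnion X)
    {p : Fin n} (hp : p ∈ S.biUnion X) :
    2 ≤ (S.filter (fun i => p ∈ X i)).card := by
  rw [show (2:ℕ) = 1 + 1 from rfl, ← Nat.lt_iff_add_one_le, Finset.one_lt_card]
  obtain ⟨i, hi, hpi⟩ := Finset.mem_biUnion.1 hp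
  have hp2 : p ∈ (S.erase i).biUnion X := by rw [hS i hi]; exact hp
  obtain ⟨j, hj, hpj⟩ := Finset.mem_biUnion.1 hp2
  exact ⟨j, Finset.mem_filter.2 ⟨Finset.mem_of_mem_erase hj, hpj⟩,
    i, Finset.mem_filter.2 ⟨hi, hpi⟩, Finset.ne_of_mem_erase hj⟩

lemma sum_filter_swap (S T : Finset (Fin n)) :
    ∑ p ∈ T, (S.filter (fun i => p ∈ X i)).card
      = ∑ i ∈ S, (T.filter (fun p => p ∈ X i)).card := by
  simp only [Finset.card_filter]
  exact Finset.sum_comm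

lemma two_mul_card_le {S : Finset (Fin n)}
    (h : ∀ p ∈ S.biUnion X, 2 ≤ (S.filter (fun i => p ∈ X i)).card) :
    2 * (S.biUnion X).card ≤ ∑ i ∈ S, (X i).card := by
  calc 2 * (S.biUnion X).card = ∑ _p ∈ S.biUnion X, 2 := by
        rw [Finset.sum_const, smul_eq_mul, mul_comm]
    _ ≤ ∑ p ∈ S.biUnion X, (S.filter (fun i => p ∈ X i)).card := Finset.sum_le_sum h
    _ = ∑ i ∈ S, ((S.biUnion X).filter (fun p => p ∈ X i)).card := sum_filter_swap S _
    _ ≤ ∑ i ∈ S, (X i).card := Finset.sum_le_sum (fun i _ => by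
        rw [Finset.filter_mem_eq_inter]
        exact Finset.card_le_card Finset.inter_subset_right)

lemma famStuck_card (hX : ∀ i, (X i).card ≤ 3) (hn : n ≤ 3 * t) {S : Finset (Fin n)}
    (h : FamStuck X t S) : S.card = 2 * t := by
  obtain ⟨hcard, heq⟩ := h
  have h2 : 2 * (S.biUnion X).card ≤ ∑ i ∈ S, (X i).card :=
    two_mul_card_le (fun p hp => two_le_filter heq hp)
  have h3 : ∑ i ∈ S, (X i).card ≤ 3 * S.card := by
    calc ∑ i ∈ S, (X i).card ≤ ∑ _i ∈ S, 3 := Finset.sum_le_sum (fun i _ => hX i)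
      _ = 3 * S.card := by rw [Finset.sum_const, smul_eq_mul, mul_comm]
  have h4 : (S.biUnion X).card ≤ n := by
    calc (S.biUnion X).card ≤ (Finset.univ : Finset (Fin n)).card :=
          Finset.card_le_card (Finset.subset_univ _)
      _ = n := by simp
  omega

lemma dbl_cover (hX : ∀ i, (X i).card ≤ 3) {S : Finset (Fin n)}
    (hstuck : FamStuck X t S) (hScard : S.card = 2 * t) (hn3 : n = 3 * t) :
    ∀ p : Fin n, (S.filter (fun i => p ∈ X i)).card = 2 := by
  have huniv : S.biUnion X = Finset.univ := by
    apply Finset.eq_univ_of_card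
    rw [hstuck.1, hScard, Fintype.card_fin]; omega
  have hge : ∀ p : Fin n, 2 ≤ (S.filter (fun i => p ∈ X i)).card := fun p =>
    two_le_filter hstuck.2 (by rw [huniv]; exact Finset.mem_univ p)
  have hsum1 : ∑ p : Fin n, (S.filter (fun i => p ∈ X i)).card
      = ∑ i ∈ S, (X i).card := by
    rw [sum_filter_swap]
    congr 1; ext i
    congr 1
    ext p; simp
  have hsum2 : ∑ i ∈ S, (X i).card ≤ 2 * n := by
    calc ∑ i ∈ S, (X i).card ≤ ∑ _i ∈ S, 3 := Finset.sum_le_sum (fun i _ => hX i)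
      _ = 3 * S.card := by rw [Finset.sum_const, smul_eq_mul, mul_comm]
      _ = 2 * n := by rw [hScard, hn3]; ring
  have hsum3 : ∑ _p : Fin n, 2 = 2 * n := by
    rw [Finset.sum_const, smul_eq_mul, mul_comm, Finset.card_univ, Fintype.card_fin]
  have hsum4 : ∑ _p : Fin n, 2 = ∑ p : Fin n, (S.filter (fun i => p ∈ X i)).card := by
    have hle : ∑ _p : Fin n, 2 ≤ ∑ p : Fin n, (S.filter (fun i => p ∈ X i)).card :=
      Finset.sum_le_sum (fun p _ => hge p)
    omega
  have := (Finset.sum_eq_sum_iff_of_le (fun p (_ : p ∈ Finset.univ) => hge p)).1 hsum4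
  intro p
  exact (this p (Finset.mem_univ p)).symm

lemma not_all_stuck (hX : ∀ i, (X i).card ≤ 3) (ht : 2 ≤ t) (hn : n ≤ 3 * t)
    {S : Finset (Fin n)} (hScard : S.card = 2 * t + 1)
    (hall : ∀ i ∈ S, FamStuck X t (S.erase i)) : False := by
  have hS0 : S.Nonempty := Finset.card_pos.1 (by omega)
  obtain ⟨i₀, hi₀⟩ := hS0
  have hec : ∀ i ∈ S, (S.erase i).card = 2 * t := fun i hi => by
    rw [Finset.card_erase_of_mem hi, hScard]; omega
  have hn3 : n = 3 * t := by
    have h1 := (hall i₀ hi₀).1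
    have h2 : ((S.erase i₀).biUnion X).card ≤ n := by
      calc ((S.erase i₀).biUnion X).card ≤ (Finset.univ : Finset (Fin n)).card :=
            Finset.card_le_card (Finset.subset_univ _)
        _ = n := by simp
    rw [hec i₀ hi₀] at h1; omega
  have hdbl : ∀ i ∈ S, ∀ p : Fin n, ((S.erase i).filter (fun j => p ∈ X j)).card = 2 :=
    fun i hi => dbl_cover hX (hall i hi) (hec i hi) hn3
  have hnpos : 0 < n := by omega
  set p : Fin n := ⟨0, hnpos⟩ with hp
  have key : ∀ i ∈ S, (p ∈ X i → (S.filter (fun j => p ∈ X j)).card = 3) ∧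
      (p ∉ X i → (S.filter (fun j => p ∈ X j)).card = 2) := by
    intro i hi
    have h2 := hdbl i hi p
    have herase : (S.erase i).filter (fun j => p ∈ X j)
        = (S.filter (fun j => p ∈ X j)).erase i := by
      ext a
      simp only [Finset.mem_filter, Finset.mem_erase]
      tauto
    rw [herase] at h2
    constructor
    · intro hpi
      have hmem : i ∈ S.filter (fun j => p ∈ X j) := Finset.mem_filter.2 ⟨hi, hpi⟩
      rw [Finset.card_erase_of_mem hmem] at h2
      have := Finset.card_pos.2 ⟨i, hmem⟩
      omega
    · intro hpi
      rwa [Finset.erase_eq_of_notMem (a := i) (s := S.filter (fun j => p ∈ X j))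
        (fun hmem => hpi (Finset.mem_filter.1 hmem).2)] at h2
  by_cases hex : ∃ i ∈ S, p ∈ X i
  · obtain ⟨i₁, hi₁, hp₁⟩ := hex
    have h3 := (key i₁ hi₁).1 hp₁
    by_cases hall2 : ∀ j ∈ S, p ∈ X j
    · have hfe : S.filter (fun j => p ∈ X j) = S := Finset.filter_true_of_mem hall2
      rw [hfe, hScard] at h3; omega
    · push_neg at hall2
      obtain ⟨j, hj, hpj⟩ := hall2
      have h4 := (key j hj).2 hpj
      omega
  · push_neg at hex
    have h4 := (key i₀ hi₀).2 (hex i₀ hi₀)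
    have hfe : S.filter (fun j => p ∈ X j) = ∅ :=
      Finset.filter_false_of_mem hex
    rw [hfe] at h4
    simp at h4

lemma card_biUnion_le_n (S : Finset (Fin n)) : (S.biUnion X).card ≤ n := by
  calc (S.biUnion X).card ≤ (Finset.univ : Finset (Fin n)).card :=
        Finset.card_le_card (Finset.subset_univ _)
    _ = n := by simp

lemma build (hX : ∀ i, (X i).card ≤ 3) (ht : 2 ≤ t) (hn : n ≤ 3 * t) :
    ∀ (k : ℕ) (S : Finset (Fin n)), S.card = k → (S.biUnion X).card ≤ k + t →
      ¬ FamStuck X t S →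
      ∃ l : List (Fin n), l.Nodup ∧ l.toFinset = S ∧
        ∀ j : ℕ, (((l.take j).toFinset).biUnion X).card ≤ j + t := by
  intro k
  induction k with
  | zero =>
    intro S hS _ _
    refine ⟨[], List.nodup_nil, by simpa using (Finset.card_eq_zero.1 hS).symm, ?_⟩
    intro j
    simp
  | succ k ih =>
    intro S hS hU hns
    have hstep : ∃ i ∈ S, ((S.erase i).biUnion X).card ≤ k + t ∧
        ¬ FamStuck X t (S.erase i) := by
      by_cases hk : k = 2 * t
      · by_contra hcon
        push_neg at hcon
        apply not_all_stuck hX ht hn (S := S) (by omega)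
        intro i hi
        have hinv : ((S.erase i).biUnion X).card ≤ k + t := by
          have := card_biUnion_le_n (X := X) (S.erase i)
          omega
        exact hcon i hi hinv
      · have hmono : ∀ i ∈ S, (S.erase i).biUnion X ⊆ S.biUnion X := fun i _ =>
          Finset.biUnion_subset_biUnion_of_subset_left _ (Finset.erase_subset _ _)
        have hnstuck : ∀ i ∈ S, ¬ FamStuck X t (S.erase i) := by
          intro i hi hst
          have := famStuck_card hX hn hst
          rw [Finset.card_erase_of_mem hi, hS] at this
          omega
        by_cases hu : (S.biUnion X).card ≤ k + t
        · obtain ⟨i, hi⟩ := Finset.card_pos.1 (show 0 < S.card by omega)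
          exact ⟨i, hi, le_trans (Finset.card_le_card (hmono i hi)) hu, hnstuck i hi⟩
        · have hne : ∃ i ∈ S, (S.erase i).biUnion X ≠ S.biUnion X := by
            by_contra hc
            push_neg at hc
            exact hns ⟨by omega, hc⟩
          obtain ⟨i, hi, hne'⟩ := hne
          have hlt : ((S.erase i).biUnion X).card < (S.biUnion X).card :=
            Finset.card_lt_card (ssubset_of_subset_of_ne (hmono i hi) hne')
          exact ⟨i, hi, by omega, hnstuck i hi⟩
    obtain ⟨i, hi, h1, h2⟩ := hstep
    obtain ⟨l, hnd, htf, hbound⟩ := ih (S.erase i)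
      (by rw [Finset.card_erase_of_mem hi, hS]; omega) h1 h2
    have hinotl : i ∉ l := by
      intro hmem
      have : i ∈ S.erase i := by rw [← htf]; exact List.mem_toFinset.2 hmem
      exact Finset.notMem_erase i S this
    have htf2 : (l ++ [i]).toFinset = S := by
      rw [List.toFinset_append, htf]
      ext a
      simp only [Finset.mem_union, Finset.mem_erase, List.toFinset_cons,
        List.toFinset_nil, LawfulSingleton.insert_empty_eq, Finset.mem_singleton]
      constructor
      · rintro (⟨_, h⟩ | rfl) <;> [exact h; exact hi]
      · intro ha
        by_cases hai : a = i
        · exact Or.inr hai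
        · exact Or.inl ⟨hai, ha⟩
    have hlenl : l.length = k := by
      rw [← List.toFinset_card_of_nodup hnd, htf, Finset.card_erase_of_mem hi, hS]
      omega
    refine ⟨l ++ [i], ?_, htf2, ?_⟩
    · rw [List.nodup_append']
      exact ⟨hnd, List.nodup_singleton i, by
        intro a ha hb
        simp only [List.mem_singleton] at hb
        subst hb
        exact hinotl ha⟩
    · intro j
      by_cases hj : j ≤ k
      · rw [List.take_append_of_le_length (by omega)]
        exact hbound j
      · rw [List.take_of_length_le (by simp [hlenl]; omega), htf2]
        omega

lemma card_unionUpTo_le (X : Fin n → Finset (Fin n)) (π : Equiv.Perm (Fin n)) (k : ℕ) :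
    (unionUpTo X π k).card ≤ n := by
  calc (unionUpTo X π k).card ≤ (Finset.univ : Finset (Fin n)).card :=
        Finset.card_le_card (Finset.subset_univ _)
    _ = n := by simp

lemma bddAbove_deltaSet (X : Fin n → Finset (Fin n)) (π : Equiv.Perm (Fin n)) :
    BddAbove {d : ℤ | ∃ k : ℕ, 1 ≤ k ∧ k ≤ n ∧ d = delta X π k} := by
  refine ⟨n, ?_⟩
  rintro d ⟨k, hk1, hkn, rfl⟩
  have h := card_unionUpTo_le X π k
  simp only [delta]
  have : ((unionUpTo X π k).card : ℤ) ≤ n := by exact_mod_cast h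
  omega

lemma deltaPerm_ge_one (hn1 : 1 ≤ n) (X : Fin n → Finset (Fin n)) (π : Equiv.Perm (Fin n)) :
    delta X π 1 ≤ DeltaPerm X π :=
  le_csSup (bddAbove_deltaSet X π) ⟨1, le_rfl, hn1, rfl⟩

lemma bddBelow_permSet (hn1 : 1 ≤ n) (X : Fin n → Finset (Fin n)) :
    BddBelow {d : ℤ | ∃ π : Equiv.Perm (Fin n), d = DeltaPerm X π} := by
  refine ⟨-1, ?_⟩
  rintro d ⟨π, rfl⟩
  refine le_trans ?_ (deltaPerm_ge_one hn1 X π)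
  simp only [delta]
  have : (0 : ℤ) ≤ ((unionUpTo X π 1).card : ℤ) := Int.natCast_nonneg _
  omega

theorem upper_bound (ht : 2 ≤ t) (hn : n ≤ 3 * t) (hn1 : 1 ≤ n)
    (hX : ∀ i, (X i).card ≤ 3) : DeltaMin X ≤ (t : ℤ) := by
  have hnotstuck : ¬ FamStuck X t (Finset.univ : Finset (Fin n)) := by
    rintro ⟨h1, -⟩
    have h2 := card_biUnion_le_n (X := X) (Finset.univ : Finset (Fin n))
    have h3 : (Finset.univ : Finset (Fin n)).card = n := by simp
    omega
  obtain ⟨l, hnd, htf, hbound⟩ := build hX ht hn n Finset.univ (by simp)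
    (by
      have := card_biUnion_le_n (X := X) (Finset.univ : Finset (Fin n))
      omega) hnotstuck
  have hlen : l.length = n := by
    rw [← List.toFinset_card_of_nodup hnd, htf, Finset.card_univ, Fintype.card_fin]
  have hinj : Function.Injective (fun i : Fin n => l.get (Fin.cast hlen.symm i)) := by
    intro a b hab
    have h2 := List.nodup_iff_injective_get.1 hnd hab
    have h3 := congrArg Fin.val h2
    simp only [Fin.coe_cast] at h3
    exact Fin.ext h3
  let π : Equiv.Perm (Fin n) :=
    Equiv.ofBijective _ ((Fintype.bijective_iff_injective_and_card _).2 ⟨hinj, rfl⟩)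
  have hπ : ∀ i : Fin n, π i = l.get (Fin.cast hlen.symm i) := fun _ => rfl
  have hUeq : ∀ k : ℕ, unionUpTo X π k = ((l.take k).toFinset).biUnion X := by
    intro k
    ext p
    simp only [unionUpTo, Finset.mem_biUnion, Finset.mem_filter, Finset.mem_univ, true_and,
      List.mem_toFinset]
    constructor
    · rintro ⟨i, hik, hp⟩
      rw [hπ] at hp
      refine ⟨l.get (Fin.cast hlen.symm i), ?_, hp⟩
      rw [List.mem_take_iff_getElem]
      exact ⟨i, by omega, by simp [List.get_eq_getElem]⟩
    · rintro ⟨a, ha, hp⟩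
      rw [List.mem_take_iff_getElem] at ha
      obtain ⟨m, hm, rfl⟩ := ha
      refine ⟨⟨m, by omega⟩, by simpa using (by omega : m < k), ?_⟩
      rw [hπ]
      simpa [List.get_eq_getElem] using hp
  have hperm : DeltaPerm X π ≤ (t : ℤ) := by
    have hne : (delta X π 1) ∈ {d : ℤ | ∃ k : ℕ, 1 ≤ k ∧ k ≤ n ∧ d = delta X π k} :=
      ⟨1, le_rfl, hn1, rfl⟩
    apply csSup_le ⟨_, hne⟩
    rintro d ⟨k, hk1, hkn, rfl⟩
    simp only [delta]
    rw [hUeq]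
    have h := hbound k
    have : ((((l.take k).toFinset).biUnion X).card : ℤ) ≤ (k : ℤ) + t := by exact_mod_cast h
    omega
  exact le_trans (csInf_le (bddBelow_permSet hn1 X) ⟨π, rfl⟩) hperm

/-! ### Lower bounds via explicit families -/

lemma unionUpTo_one (hn1 : 1 ≤ n) (X : Fin n → Finset (Fin n)) (π : Equiv.Perm (Fin n)) :
    unionUpTo X π 1 = X (π ⟨0, hn1⟩) := by
  ext p
  simp only [unionUpTo, Finset.mem_biUnion, Finset.mem_filter, Finset.mem_univ, true_and]
  constructor
  · rintro ⟨i, hik, hp⟩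
    have h0 : (i : ℕ) = 0 := by omega
    have : i = ⟨0, hn1⟩ := Fin.ext (by simpa using h0)
    rwa [← this]
  · intro hp
    exact ⟨⟨0, hn1⟩, by simp, hp⟩

lemma unionUpTo_two (hn2 : 2 ≤ n) (X : Fin n → Finset (Fin n)) (π : Equiv.Perm (Fin n)) :
    unionUpTo X π 2 = X (π ⟨0, by omega⟩) ∪ X (π ⟨1, hn2⟩) := by
  ext p
  simp only [unionUpTo, Finset.mem_biUnion, Finset.mem_filter, Finset.mem_univ, true_and,
    Finset.mem_union]
  constructor
  · rintro ⟨i, hik, hp⟩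
    have h01 : (i : ℕ) = 0 ∨ (i : ℕ) = 1 := by omega
    rcases h01 with h | h
    · exact Or.inl (by rwa [show i = ⟨0, by omega⟩ from Fin.ext (by simpa using h)] at hp)
    · exact Or.inr (by rwa [show i = ⟨1, hn2⟩ from Fin.ext (by simpa using h)] at hp)
  · rintro (hp | hp)
    · exact ⟨⟨0, by omega⟩, by simp, hp⟩
    · exact ⟨⟨1, hn2⟩, by simp, hp⟩

lemma lower_bound_one (hn1 : 1 ≤ n) (hcard : ∀ i, t + 1 ≤ (X i).card) :
    (t : ℤ) ≤ DeltaMin X := by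
  have hmem : DeltaPerm X 1 ∈ {d : ℤ | ∃ π : Equiv.Perm (Fin n), d = DeltaPerm X π} := ⟨1, rfl⟩
  apply le_csInf ⟨_, hmem⟩
  rintro d ⟨π, rfl⟩
  refine le_trans ?_ (le_csSup (bddAbove_deltaSet X π) ⟨1, le_rfl, hn1, rfl⟩)
  simp only [delta, unionUpTo_one hn1 X π]
  have := hcard (π ⟨0, hn1⟩)
  have : (t : ℤ) + 1 ≤ ((X (π ⟨0, hn1⟩)).card : ℤ) := by exact_mod_cast this
  omega

lemma lower_bound_two (hn2 : 2 ≤ n)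
    (hpair : ∀ i j : Fin n, i ≠ j → t + 2 ≤ ((X i ∪ X j)).card) :
    (t : ℤ) ≤ DeltaMin X := by
  have hmem : DeltaPerm X 1 ∈ {d : ℤ | ∃ π : Equiv.Perm (Fin n), d = DeltaPerm X π} := ⟨1, rfl⟩
  apply le_csInf ⟨_, hmem⟩
  rintro d ⟨π, rfl⟩
  refine le_trans ?_ (le_csSup (bddAbove_deltaSet X π) ⟨2, by omega, hn2, rfl⟩)
  simp only [delta, unionUpTo_two hn2 X π]
  have hne : π ⟨0, by omega⟩ ≠ π ⟨1, hn2⟩ := by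
    intro h
    have := π.injective h
    simp [Fin.ext_iff] at this
  have h := hpair _ _ hne
  have h2 : (t : ℤ) + 2 ≤ (((X (π ⟨0, by omega⟩) ∪ X (π ⟨1, hn2⟩))).card : ℤ) := by
    exact_mod_cast h
  omega

lemma fFam_eq (ht : 2 ≤ t) (hn : n ≤ 3 * t) (hn1 : 1 ≤ n)
    (X₀ : Fin n → Finset (Fin n)) (h₀ : ∀ i, (X₀ i).card ≤ 3)
    (hlow : (t : ℤ) ≤ DeltaMin X₀) : fFam n n 3 = t := by
  have hub : ∀ d ∈ {d : ℤ | ∃ X : Fin n → Finset (Fin n),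
      (∀ i, (X i).card ≤ 3) ∧ d = DeltaMin X}, d ≤ (t : ℤ) := by
    rintro d ⟨X, hX, rfl⟩
    exact upper_bound ht hn hn1 hX
  have hmem : DeltaMin X₀ ∈ {d : ℤ | ∃ X : Fin n → Finset (Fin n),
      (∀ i, (X i).card ≤ 3) ∧ d = DeltaMin X} := ⟨X₀, h₀, rfl⟩
  apply le_antisymm
  · exact csSup_le ⟨_, hmem⟩ hub
  · exact le_trans hlow (le_csSup ⟨(t : ℤ), hub⟩ hmem)

end Build

/-- For every `n` with `4 ≤ n ≤ 9`, `f(n) = ⌈n/3⌉`. -/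
theorem f_small_values (n : ℕ) (h4 : 4 ≤ n) (h9 : n ≤ 9) :
    fFam n n 3 = ⌈(n : ℚ) / 3⌉ := by
  interval_cases n
  · rw [show ⌈((4:ℕ) : ℚ) / 3⌉ = (2 : ℤ) by norm_num [Int.ceil_eq_iff]]
    exact fFam_eq (by norm_num) (by norm_num) (by norm_num)
      (fun _ => ({0,1,2} : Finset (Fin 4))) (by decide)
      (lower_bound_one (by norm_num) (by decide))
  · rw [show ⌈((5:ℕ) : ℚ) / 3⌉ = (2 : ℤ) by norm_num [Int.ceil_eq_iff]]
    exact fFam_eq (by norm_num) (by norm_num) (by norm_num)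
      (fun _ => ({0,1,2} : Finset (Fin 5))) (by decide)
      (lower_bound_one (by norm_num) (by decide))
  · rw [show ⌈((6:ℕ) : ℚ) / 3⌉ = (2 : ℤ) by norm_num [Int.ceil_eq_iff]]
    exact fFam_eq (by norm_num) (by norm_num) (by norm_num)
      (fun _ => ({0,1,2} : Finset (Fin 6))) (by decide)
      (lower_bound_one (by norm_num) (by decide))
  · rw [show ⌈((7:ℕ) : ℚ) / 3⌉ = (3 : ℤ) by norm_num [Int.ceil_eq_iff]]
    exact fFam_eq (by norm_num) (by norm_num) (by norm_num)
      (![{0,1,3},{1,2,4},{2,3,5},{3,4,6},{4,5,0},{5,6,1},{6,0,2}] :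
        Fin 7 → Finset (Fin 7)) (by decide)
      (lower_bound_two (by norm_num) (by decide))
  · rw [show ⌈((8:ℕ) : ℚ) / 3⌉ = (3 : ℤ) by norm_num [Int.ceil_eq_iff]]
    exact fFam_eq (by norm_num) (by norm_num) (by norm_num)
      (![{0,1,2},{3,4,5},{0,3,6},{1,4,7},{1,5,6},{2,3,7},{2,4,6},{0,5,7}] :
        Fin 8 → Finset (Fin 8)) (by decide)
      (lower_bound_two (by norm_num) (by decide))
  · rw [show ⌈((9:ℕ) : ℚ) / 3⌉ = (3 : ℤ) by norm_num [Int.ceil_eq_iff]]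
    exact fFam_eq (by norm_num) (by norm_num) (by norm_num)
      (![{0,1,2},{3,4,5},{6,7,8},{0,3,6},{1,4,7},{2,5,8},{0,4,8},{1,5,6},{2,3,7}] :
        Fin 9 → Finset (Fin 9)) (by decide)
      (lower_bound_two (by norm_num) (by decide))
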